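/- A proper retract of a strongly Hopfian S-act is strongly Hopfian: if there are S-homomorphisms γ : A → B and π : B → A with π ∘ γ = id_A, and B is strongly Hopfian, then A is strongly Hopfian. -/
import Mathlib


structure RAct (S : Type*) [Monoid S] (A : Type*) where
  act : A → S → A
  act_one : ∀ a, act a 1 = a
  act_mul : ∀ a s t, act a (s * t) = act (act a s) t

variable {S : Type*} [Monoid S] {A B : Type*}

/-- `f` is an S-act homomorphism from `M` to `N`. -/
def IsHom (M : RAct S A) (N : RAct S B) (f : A → B) : Prop :=
  ∀ a s, f (M.act a s) = N.act (f a) s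

/-- `f` is an S-act endomorphism of `M`. -/
def IsEnd (M : RAct S A) (f : A → A) : Prop := IsHom M M f

/-- `r` is a congruence on the S-act `M`. -/
def IsCong (M : RAct S A) (r : A → A → Prop) : Prop :=
  Equivalence r ∧ ∀ a b s, r a b → r (M.act a s) (M.act b s)

/-- The kernel congruence `K_f`. -/
def kerC {A : Type*} (f : A → A) : A → A → Prop := fun a b => f a = f b

/-- The image congruence `I_f = (im f × im f) ∪ Δ`. -/
def imC {A : Type*} (f : A → A) : A → A → Prop :=
  fun a b => a = b ∨ (a ∈ Set.range f ∧ b ∈ Set.range f)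

/-- The diagonal relation. -/
def diagR (A : Type*) : A → A → Prop := fun a b => a = b

/-- The full relation. -/
def fullR (A : Type*) : A → A → Prop := fun _ _ => True

/-- `M` is strongly Hopfian: the chain `K_f ⊆ K_{f²} ⊆ ⋯` stabilizes for every endomorphism. -/
def StronglyHopfian (M : RAct S A) : Prop :=
  ∀ f : A → A, IsEnd M f → ∃ n : ℕ, 1 ≤ n ∧ ∀ m, n ≤ m → kerC (f^[m]) = kerC (f^[n])

/-- `M` is strongly co-Hopfian: the chain `I_f ⊇ I_{f²} ⊇ ⋯` stabilizes for every endomorphism. -/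
def StronglyCoHopfian (M : RAct S A) : Prop :=
  ∀ f : A → A, IsEnd M f → ∃ n : ℕ, 1 ≤ n ∧ ∀ m, n ≤ m → imC (f^[m]) = imC (f^[n])

/-- `M` is Hopfian: every surjective endomorphism is injective. -/
def Hopfian (M : RAct S A) : Prop :=
  ∀ f : A → A, IsEnd M f → Function.Surjective f → Function.Injective f

/-- `M` is co-Hopfian: every injective endomorphism is surjective. -/
def CoHopfian (M : RAct S A) : Prop :=
  ∀ f : A → A, IsEnd M f → Function.Injective f → Function.Surjective f

/-- ACC on congruences. -/
def NoetherianAct (M : RAct S A) : Prop :=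
  ∀ c : ℕ → (A → A → Prop), (∀ n, IsCong M (c n)) →
    (∀ n a b, c n a b → c (n + 1) a b) → ∃ N, ∀ m, N ≤ m → c m = c N

/-- DCC on congruences. -/
def ArtinianAct (M : RAct S A) : Prop :=
  ∀ c : ℕ → (A → A → Prop), (∀ n, IsCong M (c n)) →
    (∀ n a b, c (n + 1) a b → c n a b) → ∃ N, ∀ m, N ≤ m → c m = c N

/-- The monoid `S` as a right act over itself. -/
def mulAct (S : Type*) [Monoid S] : RAct S S :=
  ⟨fun x s => x * s, mul_one, fun a s t => (mul_assoc a s t).symm⟩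
/-- A retract of a strongly Hopfian S-act is strongly Hopfian. -/
theorem stmt15 (M : RAct S A) (N : RAct S B) (γ : A → B) (π : B → A)
    (hγ : IsHom M N γ) (hπ : IsHom N M π) (hret : π ∘ γ = id)
    (hB : StronglyHopfian N) : StronglyHopfian M := by
  intro f hf
  have hπγ : ∀ a, π (γ a) = a := fun a => congrFun hret a
  set g : B → B := γ ∘ f ∘ π with hg
  have hgend : IsEnd N g := by
    intro b s
    simp only [hg, Function.comp_apply, hπ b s, hf (π b) s, hγ (f (π b)) s]
  have hiter : ∀ n, 1 ≤ n → ∀ b, g^[n] b = γ (f^[n] (π b)) := by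
    intro n hn
    induction n with
    | zero => omega
    | succ k ih =>
      intro b
      rcases Nat.eq_or_lt_of_le hn with h | h
      · simp [hg, ← h]
      · have hk : 1 ≤ k := by omega
        rw [Function.iterate_succ_apply', ih hk b]
        simp [hg, hπγ, Function.iterate_succ_apply']
  obtain ⟨n, hn1, hstab⟩ := hB g hgend
  refine ⟨n, hn1, fun m hm => ?_⟩
  have hγinj : Function.Injective γ := fun a b h => by
    rw [← hπγ a, ← hπγ b, h]
  funext a b
  have key : ∀ k, 1 ≤ k → (kerC (f^[k]) a b ↔ kerC (g^[k]) (γ a) (γ b)) := by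
    intro k hk
    unfold kerC
    rw [hiter k hk, hiter k hk, hπγ, hπγ]
    exact ⟨fun h => by rw [h], fun h => hγinj h⟩
  have hm1 : 1 ≤ m := le_trans hn1 hm
  have := hstab m hm
  rw [eq_iff_iff, key m hm1, key n hn1, this]
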